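/- arXiv:2505.09247 — 2 statements merged into one kernel-verified Lean document; each statement's English description precedes it below -/
import Mathlib

section
/- Let $C$ be a symmetric positive definite $n\times n$ real matrix, $Z$ a $p\times n$ real matrix with $Z C Z^{T}$ invertible, and $G$ an $n\times q$ real matrix. Suppose $A:=G^{T}C^{-1}G$ and $B:=G^{T}Z^{T}(Z C Z^{T})^{-1}Z G$ are both positive definite. Then $A^{-1}\preceq B^{-1}$ in the Loewner order, i.e. $B^{-1}-A^{-1}$ is positive semidefinite. (This is the matrix content of Theorem 2(c): the asymptotic covariance $\Sigma_Q=[\dot G_K^{T}C_K^{-1}\dot G_K]^{-1}$ of the QIF estimator is no larger than the asymptotic covariance $\Sigma_G=[\dot G_K^{T}Z^{T}(Z C_K Z^{T})^{-1}Z\dot G_K]^{-1}$ of the GEE estimator.) -/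
open Matrix
open scoped MatrixOrder

private lemma psd_congr {m k : ℕ} {A : Matrix (Fin m) (Fin m) ℝ} (hA : A.PosSemidef)
    (M : Matrix (Fin m) (Fin k) ℝ) : (Mᵀ * A * M).PosSemidef := by
  have := hA.conjTranspose_mul_mul_same M
  rwa [conjTranspose_eq_transpose_of_trivial] at this

private lemma psd_tmul {m k : ℕ} (M : Matrix (Fin m) (Fin k) ℝ) : (Mᵀ * M).PosSemidef := by
  have := posSemidef_conjTranspose_mul_self M
  rwa [conjTranspose_eq_transpose_of_trivial] at this

private lemma psd_symm_t {m : ℕ} {A : Matrix (Fin m) (Fin m) ℝ} (hA : A.PosSemidef) :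
    Aᵀ = A := by
  have := hA.1
  rwa [IsHermitian, conjTranspose_eq_transpose_of_trivial] at this

/-- `MᵀM - MᵀN (NᵀN)⁻¹ NᵀM ⪰ 0` : the difference is a congruence of `I - P` with `P`
an orthogonal projection. -/
private lemma proj_diff {n p q : ℕ} (M : Matrix (Fin n) (Fin q) ℝ)
    (N : Matrix (Fin n) (Fin p) ℝ) (h : (Nᵀ * N)⁻¹ * (Nᵀ * N) = 1) :
    (Mᵀ * M - Mᵀ * N * (Nᵀ * N)⁻¹ * (Nᵀ * M)).PosSemidef := by
  have canN : ∀ {k : ℕ} (x : Matrix (Fin p) (Fin k) ℝ),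
      (Nᵀ * N)⁻¹ * (Nᵀ * (N * x)) = x := by
    intro k x
    rw [← Matrix.mul_assoc Nᵀ N x, ← Matrix.mul_assoc, h, Matrix.one_mul]
  set P := N * ((Nᵀ * N)⁻¹ * Nᵀ) with hPdef
  have hPt : Pᵀ = P := by
    rw [hPdef]
    simp [transpose_mul, transpose_nonsing_inv, Matrix.mul_assoc]
  have hPP : P * P = P := by
    rw [hPdef]
    simp [Matrix.mul_assoc, canN]
  set Q := (1 : Matrix (Fin n) (Fin n) ℝ) - P with hQdef
  have hQt : Qᵀ = Q := by rw [hQdef, transpose_sub, transpose_one, hPt]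
  have hQQ : Q * Q = Q := by
    rw [hQdef]
    simp only [Matrix.mul_sub, Matrix.sub_mul, Matrix.mul_one, Matrix.one_mul, hPP]
    abel
  have key := psd_tmul (Q * M)
  have e : (Q * M)ᵀ * (Q * M) = Mᵀ * M - Mᵀ * N * (Nᵀ * N)⁻¹ * (Nᵀ * M) := by
    rw [transpose_mul, hQt, Matrix.mul_assoc, ← Matrix.mul_assoc Q Q M, hQQ,
      hQdef, Matrix.sub_mul, Matrix.one_mul, Matrix.mul_sub]
    congr 1
    rw [hPdef]
    simp [Matrix.mul_assoc]
  rwa [e] at key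

/-- Loewner antitonicity of the inverse on positive definite matrices. -/
private lemma inv_antitone {m : ℕ} {A B : Matrix (Fin m) (Fin m) ℝ}
    (hA : A.PosDef) (hB : B.PosDef) (hAB : (A - B).PosSemidef) :
    (B⁻¹ - A⁻¹).PosSemidef := by
  have hBi := hB.inv
  set T := CFC.sqrt (B⁻¹) with hTdef
  have hTpsd : T.PosSemidef := Matrix.nonneg_iff_posSemidef.mp (CFC.sqrt_nonneg _)
  have hTT : T * T = B⁻¹ :=
    CFC.sqrt_mul_sqrt_self _ (Matrix.nonneg_iff_posSemidef.mpr hBi.posSemidef)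
  have hTt : Tᵀ = T := psd_symm_t hTpsd
  clear_value T
  have hTdet : T.det ≠ 0 := by
    intro h
    have : (B⁻¹).det = 0 := by rw [← hTT, det_mul, h, mul_zero]
    exact hBi.det_pos.ne' this
  have hTl : T⁻¹ * T = 1 := nonsing_inv_mul T hTdet.isUnit
  have hTr : T * T⁻¹ = 1 := mul_nonsing_inv T hTdet.isUnit
  have canTl : ∀ x : Matrix (Fin m) (Fin m) ℝ, T⁻¹ * (T * x) = x := fun x => by
    rw [← Matrix.mul_assoc, hTl, Matrix.one_mul]
  have canTr : ∀ x : Matrix (Fin m) (Fin m) ℝ, T * (T⁻¹ * x) = x := fun x => by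
    rw [← Matrix.mul_assoc, hTr, Matrix.one_mul]
  set X := T * A * T with hXdef
  have hXpsd : X.PosSemidef := by
    have := psd_congr hA.posSemidef T
    rwa [hTt] at this
  have hXdet : X.det ≠ 0 := by
    rw [hXdef, det_mul, det_mul]
    exact mul_ne_zero (mul_ne_zero hTdet hA.det_pos.ne') hTdet
  have hXl : X⁻¹ * X = 1 := nonsing_inv_mul X hXdet.isUnit
  have hXit : (X⁻¹)ᵀ = X⁻¹ := by
    rw [transpose_nonsing_inv, psd_symm_t hXpsd]
  have hXipsd : (X⁻¹).PosSemidef := by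
    have := psd_congr hXpsd X⁻¹
    rwa [hXit, Matrix.mul_assoc, ← Matrix.mul_assoc, hXl, Matrix.one_mul] at this
  have hBeq : B = T⁻¹ * T⁻¹ := by
    have : B = (B⁻¹)⁻¹ := (Matrix.nonsing_inv_nonsing_inv B
      ((Matrix.isUnit_iff_isUnit_det B).1 hB.isUnit)).symm
    rw [this, ← hTT, Matrix.mul_inv_rev]
  -- X - 1 is PSD
  have hX1 : (X - 1).PosSemidef := by
    have h := psd_congr hAB T
    rw [hTt] at h
    have e : T * (A - B) * T = X - 1 := by
      rw [Matrix.mul_sub, Matrix.sub_mul, ← hXdef]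
      congr 1
      rw [hBeq]
      simp [Matrix.mul_assoc, canTr, hTl, hTr]
    rwa [e] at h
  -- square root of X⁻¹
  set R := CFC.sqrt (X⁻¹) with hRdef
  have hRpsd : R.PosSemidef := Matrix.nonneg_iff_posSemidef.mp (CFC.sqrt_nonneg _)
  have hRR : R * R = X⁻¹ :=
    CFC.sqrt_mul_sqrt_self _ (Matrix.nonneg_iff_posSemidef.mpr hXipsd)
  have hRt : Rᵀ = R := psd_symm_t hRpsd
  clear_value R
  have hRdet : R.det ≠ 0 := by
    intro h
    have h2 : (X⁻¹).det = 0 := by rw [← hRR, det_mul, h, mul_zero]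
    rw [Matrix.det_nonsing_inv] at h2
    exact hXdet (by simpa using h2)
  have hRl : R⁻¹ * R = 1 := nonsing_inv_mul R hRdet.isUnit
  have hRr : R * R⁻¹ = 1 := mul_nonsing_inv R hRdet.isUnit
  have canRr : ∀ x : Matrix (Fin m) (Fin m) ℝ, R * (R⁻¹ * x) = x := fun x => by
    rw [← Matrix.mul_assoc, hRr, Matrix.one_mul]
  have hXeq : X = R⁻¹ * R⁻¹ := by
    have : X = (X⁻¹)⁻¹ := (Matrix.nonsing_inv_nonsing_inv X hXdet.isUnit).symm
    rw [this, ← hRR, Matrix.mul_inv_rev]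
  have hRXR : R * X * R = 1 := by
    rw [hXeq]
    simp [Matrix.mul_assoc, canRr, hRl, hRr]
  -- 1 - X⁻¹ is PSD
  have h1 : ((1 : Matrix (Fin m) (Fin m) ℝ) - X⁻¹).PosSemidef := by
    have h := psd_congr hX1 R
    rw [hRt] at h
    have e : R * (X - 1) * R = 1 - X⁻¹ := by
      rw [Matrix.mul_sub, Matrix.mul_one, Matrix.sub_mul, hRXR, hRR]
    rwa [e] at h
  -- conclude
  have hTXT : T * X⁻¹ * T = A⁻¹ := by
    have e : X⁻¹ = T⁻¹ * (A⁻¹ * T⁻¹) := by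
      rw [hXdef, Matrix.mul_inv_rev, Matrix.mul_inv_rev]
    rw [e]
    simp [Matrix.mul_assoc, canTl, canTr, hTl, hTr]
  have h2 := psd_congr h1 T
  rw [hTt] at h2
  have e : T * (1 - X⁻¹) * T = B⁻¹ - A⁻¹ := by
    rw [Matrix.mul_sub, Matrix.mul_one, Matrix.sub_mul, hTT, hTXT]
  rwa [e] at h2

/-- Theorem 2(c), matrix form: the asymptotic covariance `A⁻¹ = (Gᵀ C⁻¹ G)⁻¹` of the
QIF estimator is no larger (in the Loewner order) than the asymptotic covariance
`B⁻¹ = (Gᵀ Zᵀ (Z C Zᵀ)⁻¹ Z G)⁻¹` of the GEE estimator. -/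
theorem qif_covariance_le_gee {n p q : ℕ}
    (C : Matrix (Fin n) (Fin n) ℝ) (hC : C.PosDef)
    (Z : Matrix (Fin p) (Fin n) ℝ) (hZ : IsUnit (Z * C * Zᵀ))
    (G : Matrix (Fin n) (Fin q) ℝ)
    (hA : (Gᵀ * C⁻¹ * G).PosDef)
    (hB : (Gᵀ * Zᵀ * (Z * C * Zᵀ)⁻¹ * (Z * G)).PosDef) :
    ((Gᵀ * Zᵀ * (Z * C * Zᵀ)⁻¹ * (Z * G))⁻¹ - (Gᵀ * C⁻¹ * G)⁻¹).PosSemidef := by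
  have hCi := hC.inv
  set S := CFC.sqrt (C⁻¹) with hSdef
  have hSpsd : S.PosSemidef := Matrix.nonneg_iff_posSemidef.mp (CFC.sqrt_nonneg _)
  have hSS : S * S = C⁻¹ :=
    CFC.sqrt_mul_sqrt_self _ (Matrix.nonneg_iff_posSemidef.mpr hCi.posSemidef)
  have hSt : Sᵀ = S := psd_symm_t hSpsd
  clear_value S
  have hSdet : S.det ≠ 0 := by
    intro h
    have : (C⁻¹).det = 0 := by rw [← hSS, det_mul, h, mul_zero]
    exact hCi.det_pos.ne' this
  have hSl : S⁻¹ * S = 1 := nonsing_inv_mul S hSdet.isUnit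
  have hSr : S * S⁻¹ = 1 := mul_nonsing_inv S hSdet.isUnit
  have hSit : (S⁻¹)ᵀ = S⁻¹ := by rw [transpose_nonsing_inv, hSt]
  have hCeq : C = S⁻¹ * S⁻¹ := by
    have : C = (C⁻¹)⁻¹ := (Matrix.nonsing_inv_nonsing_inv C
      ((Matrix.isUnit_iff_isUnit_det C).1 hC.isUnit)).symm
    rw [this, ← hSS, Matrix.mul_inv_rev]
  set M := S * G with hMdef
  set N := S⁻¹ * Zᵀ with hNdef
  have hNt : Nᵀ = Z * S⁻¹ := by rw [hNdef, transpose_mul, hSit, transpose_transpose]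
  have hNtN : Nᵀ * N = Z * C * Zᵀ := by
    rw [hNt, hNdef, hCeq, Matrix.mul_assoc, Matrix.mul_assoc, Matrix.mul_assoc]
  have hMt : Mᵀ = Gᵀ * S := by rw [hMdef, transpose_mul, hSt]
  have hAeq : Gᵀ * C⁻¹ * G = Mᵀ * M := by
    rw [hMt, hMdef, ← hSS, Matrix.mul_assoc, Matrix.mul_assoc, Matrix.mul_assoc]
  have hGZ : Gᵀ * Zᵀ = Mᵀ * N := by
    rw [hMt, hNdef, Matrix.mul_assoc, ← Matrix.mul_assoc S S⁻¹ Zᵀ, hSr, Matrix.one_mul]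
  have hZG : Z * G = Nᵀ * M := by
    rw [hNt, hMdef, Matrix.mul_assoc, ← Matrix.mul_assoc S⁻¹ S G, hSl, Matrix.one_mul]
  have hdetZ : IsUnit (Nᵀ * N).det := by
    rw [hNtN]; exact (Matrix.isUnit_iff_isUnit_det _).1 hZ
  have hNl : (Nᵀ * N)⁻¹ * (Nᵀ * N) = 1 := nonsing_inv_mul _ hdetZ
  have hdiff : (Gᵀ * C⁻¹ * G - Gᵀ * Zᵀ * (Z * C * Zᵀ)⁻¹ * (Z * G)).PosSemidef := by
    rw [hAeq, ← hNtN, hGZ, hZG]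
    exact proj_diff M N hNl
  exact inv_antitone hA hB hdiff
end

section
/- Let $\Omega$ be a symmetric positive definite $n\times n$ real matrix, $W$ a symmetric $n\times n$ real matrix, and $G$ an $n\times p$ real matrix such that $G^{T}W\Omega W G$ is invertible. Then the matrix $S = G^{T}\Omega^{-1}G - \bigl(G^{T}WG\bigr)\bigl(G^{T}W\Omega W G\bigr)^{-1}\bigl(G^{T}WG\bigr)$ is positive semidefinite. Moreover, if $W=\Omega^{-1}$ then $S=0$. -/
open Matrix

/-- Matrix inequality at the heart of Theorem 2(d) (optimality of QIF):
`S = Gᵀ Ω⁻¹ G - (Gᵀ W G)(Gᵀ W Ω W G)⁻¹(Gᵀ W G)` is positive semidefinite, and `S = 0`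
when `W = Ω⁻¹`. -/
theorem gmm_optimality_core {n p : ℕ}
    (Ω : Matrix (Fin n) (Fin n) ℝ) (hΩ : Ω.PosDef)
    (W : Matrix (Fin n) (Fin n) ℝ) (hW : Wᵀ = W)
    (G : Matrix (Fin n) (Fin p) ℝ) (hinv : IsUnit (Gᵀ * W * Ω * W * G)) :
    (Gᵀ * Ω⁻¹ * G -
        (Gᵀ * W * G) * (Gᵀ * W * Ω * W * G)⁻¹ * (Gᵀ * W * G)).PosSemidef ∧
      (W = Ω⁻¹ →
        Gᵀ * Ω⁻¹ * G -
            (Gᵀ * W * G) * (Gᵀ * W * Ω * W * G)⁻¹ * (Gᵀ * W * G) = 0) := by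
  have hΩdet : IsUnit Ω.det := isUnit_iff_ne_zero.mpr hΩ.det_pos.ne'
  have hΩsymm : Ωᵀ = Ω := by
    have := hΩ.1
    rwa [IsHermitian, conjTranspose_eq_transpose_of_trivial] at this
  constructor
  · -- square root of Ω
    set R := (open scoped MatrixOrder in CFC.sqrt Ω) with hRdef
    have hRR : R * R = Ω := open scoped MatrixOrder in CFC.sqrt_mul_sqrt_self Ω hΩ.posSemidef.nonneg
    have hRsymm : Rᵀ = R := by
      have := open scoped MatrixOrder in (nonneg_iff_posSemidef.mp (CFC.sqrt_nonneg Ω)).1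
      rwa [IsHermitian, conjTranspose_eq_transpose_of_trivial] at this
    have hRdet : IsUnit R.det := by
      have : R.det * R.det = Ω.det := by rw [← det_mul, hRR]
      exact isUnit_of_mul_isUnit_left (this ▸ hΩdet)
    have hRinv : R * R⁻¹ = 1 := mul_nonsing_inv R hRdet
    have hRinv' : R⁻¹ * R = 1 := nonsing_inv_mul R hRdet
    set A := R⁻¹ * G with hA
    set B := R * W * G with hB
    have hΩinv : Ω⁻¹ = R⁻¹ * R⁻¹ := by rw [← hRR, Matrix.mul_inv_rev]
    have hAT : Aᵀ = Gᵀ * R⁻¹ := by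
      rw [hA, transpose_mul, transpose_nonsing_inv, hRsymm]
    have hBT : Bᵀ = Gᵀ * W * R := by
      rw [hB, transpose_mul, transpose_mul, hRsymm, hW, Matrix.mul_assoc]
    have h1 : Gᵀ * Ω⁻¹ * G = Aᵀ * A := by
      rw [hAT, hA, hΩinv]; simp only [Matrix.mul_assoc]
    have h2 : Gᵀ * W * G = Aᵀ * B := by
      rw [hAT, hB]
      simp only [Matrix.mul_assoc]
      rw [← Matrix.mul_assoc R⁻¹ R, hRinv', Matrix.one_mul]
    have h3 : Gᵀ * W * Ω * W * G = Bᵀ * B := by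
      rw [hBT, hB, ← hRR]; simp only [Matrix.mul_assoc]
    set M := Gᵀ * W * Ω * W * G with hM
    have hMsymm : Mᵀ = M := by
      rw [hM]
      simp only [transpose_mul, transpose_transpose, hW, hΩsymm, Matrix.mul_assoc]
    have hMdet : IsUnit M.det := (isUnit_iff_isUnit_det M).mp hinv
    have hMinvsymm : (M⁻¹)ᵀ = M⁻¹ := by rw [transpose_nonsing_inv, hMsymm]
    have hMM : M * M⁻¹ = 1 := mul_nonsing_inv M hMdet
    have h2' : Gᵀ * W * G = Bᵀ * A := by
      have hsym : (Gᵀ * W * G)ᵀ = Gᵀ * W * G := by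
        simp only [transpose_mul, transpose_transpose, hW, Matrix.mul_assoc]
      rw [← hsym, h2, transpose_mul, transpose_transpose]
    have hCT : (A - B * (M⁻¹ * (Bᵀ * A)))ᵀ = Aᵀ - Aᵀ * (B * (M⁻¹ * Bᵀ)) := by
      simp only [transpose_sub, transpose_mul, transpose_transpose, hMinvsymm,
        Matrix.mul_assoc]
    have collapse : Bᵀ * (B * (M⁻¹ * (Bᵀ * A))) = Bᵀ * A := by
      rw [← Matrix.mul_assoc, ← h3, ← Matrix.mul_assoc, hMM, Matrix.one_mul]
    have key : Gᵀ * Ω⁻¹ * G - (Gᵀ * W * G) * M⁻¹ * (Gᵀ * W * G)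
        = (A - B * (M⁻¹ * (Bᵀ * A)))ᵀ * (A - B * (M⁻¹ * (Bᵀ * A))) := by
      nth_rewrite 2 [h2']
      rw [h1, h2, hCT, Matrix.sub_mul, Matrix.mul_sub, Matrix.mul_sub]
      simp only [Matrix.mul_assoc]
      rw [collapse]
      abel
    rw [key]
    have := posSemidef_conjTranspose_mul_self (A - B * (M⁻¹ * (Bᵀ * A)))
    rwa [conjTranspose_eq_transpose_of_trivial] at this
  · intro hWΩ
    subst hWΩ
    have hΩinvΩ : Ω⁻¹ * Ω = 1 := nonsing_inv_mul Ω hΩdet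
    have hsimp : Gᵀ * Ω⁻¹ * Ω * Ω⁻¹ * G = Gᵀ * Ω⁻¹ * G := by
      have h : Gᵀ * Ω⁻¹ * Ω * Ω⁻¹ * G = Gᵀ * (Ω⁻¹ * Ω) * (Ω⁻¹ * G) := by
        simp only [Matrix.mul_assoc]
      rw [h, hΩinvΩ, Matrix.mul_one, Matrix.mul_assoc]
    rw [hsimp] at hinv ⊢
    have hXdet : IsUnit (Gᵀ * Ω⁻¹ * G).det := (isUnit_iff_isUnit_det _).mp hinv
    rw [mul_nonsing_inv _ hXdet, Matrix.one_mul, sub_self]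
end
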